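/- Let A be an n×n real symmetric positive semidefinite matrix with eigenvalues λ_1 ≥ … ≥ λ_n and λ_k > 0, and let W₁ ∈ ℝ^{n×k} be a matrix whose columns are orthonormal eigenvectors of A associated with λ_1, …, λ_k. Let X ∈ ℝ^{n×k} be such that XᵀAX is invertible and σ_min(W₁ᵀX) > 0. Then ‖A X (XᵀAX)^{-1}‖₂ ≤ (λ_1/λ_k)^{1/2} / σ_min(W₁ᵀX). -/

import Mathlib

open Matrix

/-- The spectral norm (largest singular value) of a real matrix,
as the `ℓ²→ℓ²` operator norm. -/
noncomputable def matSpectralNorm {m n : ℕ} (M : Matrix (Fin m) (Fin n) ℝ) : ℝ :=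
  ‖LinearMap.toContinuousLinearMap (Matrix.toEuclideanLin M)‖

/-- The smallest singular value of a square real matrix: `σ_min(M) = min_{‖x‖=1} ‖Mx‖`. -/
noncomputable def sigmaMin {n : ℕ} (M : Matrix (Fin n) (Fin n) ℝ) : ℝ :=
  ⨅ x : Metric.sphere (0 : EuclideanSpace ℝ (Fin n)) 1,
    ‖Matrix.toEuclideanLin M (x : EuclideanSpace ℝ (Fin n))‖

section Aux
open scoped Matrix.Norms.L2Operator RealInnerProductSpace

lemma spectralNorm_eq_norm {m n : ℕ} (M : Matrix (Fin m) (Fin n) ℝ) :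
    matSpectralNorm M = ‖M‖ := rfl

lemma dot_eq_inner {p : ℕ} (x y : EuclideanSpace ℝ (Fin p)) :
    (WithLp.equiv 2 (Fin p → ℝ) x) ⬝ᵥ (WithLp.equiv 2 (Fin p → ℝ) y) = ⟪x, y⟫ := by
  simp [PiLp.inner_apply, dotProduct, mul_comm]

lemma norm_sq_eq_dot {p : ℕ} (x : EuclideanSpace ℝ (Fin p)) :
    ‖x‖ ^ 2 = (WithLp.equiv 2 (Fin p → ℝ) x) ⬝ᵥ (WithLp.equiv 2 (Fin p → ℝ) x) := by
  rw [dot_eq_inner, real_inner_self_eq_norm_sq]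

lemma toEuclideanLin_apply' {m p : ℕ} (M : Matrix (Fin m) (Fin p) ℝ)
    (x : EuclideanSpace ℝ (Fin p)) :
    toEuclideanLin M x
      = (WithLp.equiv 2 (Fin m → ℝ)).symm (M *ᵥ (WithLp.equiv 2 (Fin p → ℝ) x)) := rfl

lemma norm_toEuclideanLin_sq {m p : ℕ} (M : Matrix (Fin m) (Fin p) ℝ)
    (x : EuclideanSpace ℝ (Fin p)) :
    ‖toEuclideanLin M x‖ ^ 2
      = (M *ᵥ (WithLp.equiv 2 (Fin p → ℝ) x)) ⬝ᵥ (M *ᵥ (WithLp.equiv 2 (Fin p → ℝ) x)) := by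
  rw [toEuclideanLin_apply', norm_sq_eq_dot]
  simp

lemma l2_opNorm_le_of_dot {m p : ℕ} (M : Matrix (Fin m) (Fin p) ℝ) {c : ℝ} (hc : 0 ≤ c)
    (h : ∀ v : Fin p → ℝ, (M *ᵥ v) ⬝ᵥ (M *ᵥ v) ≤ c ^ 2 * (v ⬝ᵥ v)) : ‖M‖ ≤ c := by
  rw [Matrix.l2_opNorm_def]
  refine ContinuousLinearMap.opNorm_le_bound _ hc fun x => ?_
  show ‖toEuclideanLin M x‖ ≤ c * ‖x‖
  have h2 : ‖toEuclideanLin M x‖ ^ 2 ≤ (c * ‖x‖) ^ 2 := by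
    rw [norm_toEuclideanLin_sq]
    calc (M *ᵥ _) ⬝ᵥ (M *ᵥ _)
        ≤ c ^ 2 * ((WithLp.equiv 2 (Fin p → ℝ) x) ⬝ᵥ (WithLp.equiv 2 (Fin p → ℝ) x)) := h _
      _ = (c * ‖x‖) ^ 2 := by rw [← norm_sq_eq_dot]; ring
  calc ‖toEuclideanLin M x‖ = Real.sqrt (‖toEuclideanLin M x‖ ^ 2) :=
        (Real.sqrt_sq (norm_nonneg _)).symm
    _ ≤ Real.sqrt ((c * ‖x‖) ^ 2) := Real.sqrt_le_sqrt h2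
    _ = c * ‖x‖ := Real.sqrt_sq (by positivity)

lemma sigmaMin_mul_norm_le {p : ℕ} (M : Matrix (Fin p) (Fin p) ℝ)
    (x : EuclideanSpace ℝ (Fin p)) :
    sigmaMin M * ‖x‖ ≤ ‖toEuclideanLin M x‖ := by
  rcases eq_or_ne x 0 with rfl | hx
  · simp
  · have hxn : (0:ℝ) < ‖x‖ := norm_pos_iff.mpr hx
    set u : Metric.sphere (0 : EuclideanSpace ℝ (Fin p)) 1 :=
      ⟨‖x‖⁻¹ • x, by simp [norm_smul, abs_of_pos (inv_pos.mpr hxn), inv_mul_cancel₀ hxn.ne']⟩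
    have hb : BddBelow (Set.range fun u : Metric.sphere (0 : EuclideanSpace ℝ (Fin p)) 1 =>
        ‖toEuclideanLin M (u : EuclideanSpace ℝ (Fin p))‖) :=
      ⟨0, by rintro y ⟨u, rfl⟩; exact norm_nonneg _⟩
    have h1 : sigmaMin M ≤ ‖toEuclideanLin M (u : EuclideanSpace ℝ (Fin p))‖ := ciInf_le hb u
    have h2 : ‖toEuclideanLin M (u : EuclideanSpace ℝ (Fin p))‖
        = ‖x‖⁻¹ * ‖toEuclideanLin M x‖ := by
      show ‖toEuclideanLin M (‖x‖⁻¹ • x)‖ = _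
      rw [_root_.map_smul, norm_smul, Real.norm_eq_abs, abs_of_pos (inv_pos.mpr hxn)]
    rw [h2] at h1
    calc sigmaMin M * ‖x‖ ≤ (‖x‖⁻¹ * ‖toEuclideanLin M x‖) * ‖x‖ :=
          mul_le_mul_of_nonneg_right h1 hxn.le
      _ = ‖toEuclideanLin M x‖ := by field_simp

lemma dot_mulVec_left {m p : ℕ} (M : Matrix (Fin m) (Fin p) ℝ) (v : Fin p → ℝ) (w : Fin m → ℝ) :
    (M *ᵥ v) ⬝ᵥ w = v ⬝ᵥ (Mᵀ *ᵥ w) := by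
  rw [mulVec_transpose, dotProduct_comm, dotProduct_mulVec, dotProduct_comm]

lemma psd_sub_smul_dot {n : ℕ} {A P : Matrix (Fin n) (Fin n) ℝ} {c : ℝ} (v : Fin n → ℝ)
    (h : (A - c • P).PosSemidef) : c * (v ⬝ᵥ (P *ᵥ v)) ≤ v ⬝ᵥ (A *ᵥ v) := by
  have := h.dotProduct_mulVec_nonneg v
  simp only [star_trivial, sub_mulVec, smul_mulVec, dotProduct_sub, dotProduct_smul,
    smul_eq_mul] at this
  linarith

end Aux


section Main
open scoped Matrix.Norms.L2Operator RealInnerProductSpace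

/-- Let `A` be an `n×n` real symmetric positive semidefinite matrix with eigenvalues
`λ_1 ≥ … ≥ λ_n` (eigendecomposition `A = W diag(λ) Wᵀ` with `W` orthogonal) and `λ_k > 0`,
and let `W₁ ∈ ℝ^{n×k}` have orthonormal columns which are eigenvectors of `A` associated
with `λ_1, …, λ_k`. Let `X ∈ ℝ^{n×k}` be such that `XᵀAX` is invertible and
`σ_min(W₁ᵀX) > 0`. Then `‖A X (XᵀAX)⁻¹‖₂ ≤ (λ_1/λ_k)^{1/2} / σ_min(W₁ᵀX)`. -/
theorem stmt1 {n k : ℕ} (hk : 1 ≤ k) (hkn : k ≤ n)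
    (A : Matrix (Fin n) (Fin n) ℝ) (hA : A.PosSemidef)
    (lam : Fin n → ℝ) (hlam : Antitone lam)
    (W : Matrix (Fin n) (Fin n) ℝ) (hW : Wᵀ * W = 1)
    (hAeig : A = W * Matrix.diagonal lam * Wᵀ)
    (hlamk : 0 < lam ⟨k - 1, by omega⟩)
    (W₁ : Matrix (Fin n) (Fin k) ℝ) (hW₁orth : W₁ᵀ * W₁ = 1)
    (hW₁eig : A * W₁ = W₁ * Matrix.diagonal (fun i : Fin k => lam (Fin.castLE hkn i)))
    (X : Matrix (Fin n) (Fin k) ℝ)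
    (hXAX : IsUnit (Xᵀ * A * X))
    (hσ : 0 < sigmaMin (W₁ᵀ * X)) :
    matSpectralNorm (A * X * (Xᵀ * A * X)⁻¹) ≤
      Real.sqrt (lam ⟨0, by omega⟩ / lam ⟨k - 1, by omega⟩) / sigmaMin (W₁ᵀ * X) := by
  classical
  rw [spectralNorm_eq_norm]
  set σ := sigmaMin (W₁ᵀ * X) with hσdef
  set S := Xᵀ * A * X with hSdef
  set l1 := lam ⟨0, by omega⟩ with hl1def
  set lk := lam ⟨k - 1, by omega⟩ with hlkdef
  have hlk : 0 < lk := hlamk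
  have hl1k : lk ≤ l1 := hlam (Fin.mk_le_mk.mpr (by omega))
  have hl1 : 0 < l1 := lt_of_lt_of_le hlk hl1k
  have hσ2 : (0:ℝ) < lk * σ ^ 2 := by positivity
  -- the psd square root of A
  open scoped MatrixOrder in set B := CFC.sqrt A with hBdef
  open scoped MatrixOrder in have hBB : B * B = A := CFC.sqrt_mul_sqrt_self A hA.nonneg
  open scoped MatrixOrder in have hBps : B.PosSemidef := (CFC.sqrt_nonneg A).posSemidef
  have hBT : Bᵀ = B := by rw [← conjTranspose_eq_transpose_of_trivial, hBps.1]
  have hAT : Aᵀ = A := by rw [← conjTranspose_eq_transpose_of_trivial, hA.1]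
  -- PSD fact 1 : l1 • 1 - A is PSD
  have hPSD1 : (l1 • (1 : Matrix (Fin n) (Fin n) ℝ) - A).PosSemidef := by
    have hWWT : W * Wᵀ = 1 := mul_eq_one_comm.mp hW
    have hD : Matrix.diagonal (fun i => l1 - lam i)
        = l1 • (1 : Matrix (Fin n) (Fin n) ℝ) - Matrix.diagonal lam := by
      ext i j
      by_cases h : i = j <;> simp [Matrix.diagonal_apply, Matrix.one_apply, h]
    have key : l1 • (1 : Matrix (Fin n) (Fin n) ℝ) - A
        = W * Matrix.diagonal (fun i => l1 - lam i) * Wᵀ := by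
      rw [hD, Matrix.mul_sub, Matrix.sub_mul, hAeig]
      simp [Matrix.mul_smul, Matrix.smul_mul, hWWT, Matrix.mul_assoc]
    rw [key]
    have hps : (Matrix.diagonal (fun i => l1 - lam i)).PosSemidef :=
      posSemidef_diagonal_iff.mpr fun i => sub_nonneg.mpr (hlam (Fin.mk_le_mk.mpr (by omega)))
    have := hps.mul_mul_conjTranspose_same W
    rwa [conjTranspose_eq_transpose_of_trivial] at this
  -- PSD fact 2 : A - lk • W₁W₁ᵀ is PSD
  have hPSD2 : (A - lk • (W₁ * W₁ᵀ)).PosSemidef := by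
    set D₁ : Matrix (Fin k) (Fin k) ℝ :=
      Matrix.diagonal (fun i : Fin k => lam (Fin.castLE hkn i)) with hD₁
    set P : Matrix (Fin n) (Fin n) ℝ := W₁ * W₁ᵀ with hP
    have hD₁T : D₁ᵀ = D₁ := by rw [hD₁, Matrix.diagonal_transpose]
    have hW₁TA : W₁ᵀ * A = D₁ * W₁ᵀ := by
      have := congrArg Matrix.transpose hW₁eig
      rwa [Matrix.transpose_mul, Matrix.transpose_mul, hAT, hD₁T] at this
    have hPT : Pᵀ = P := by rw [hP, Matrix.transpose_mul, Matrix.transpose_transpose]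
    have e1 : A * P = W₁ * D₁ * W₁ᵀ := by
      rw [hP, ← Matrix.mul_assoc, hW₁eig]
    have e2 : P * A = W₁ * D₁ * W₁ᵀ := by
      rw [hP, Matrix.mul_assoc, hW₁TA, Matrix.mul_assoc]
    have e3 : P * (A * P) = W₁ * D₁ * W₁ᵀ := by
      rw [e1, hP, Matrix.mul_assoc, Matrix.mul_assoc, ← Matrix.mul_assoc W₁ᵀ, hW₁orth,
        Matrix.one_mul, ← Matrix.mul_assoc]
    have hDk : Matrix.diagonal (fun i : Fin k => lam (Fin.castLE hkn i) - lk)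
        = D₁ - lk • (1 : Matrix (Fin k) (Fin k) ℝ) := by
      ext i j
      by_cases h : i = j <;> simp [hD₁, Matrix.diagonal_apply, Matrix.one_apply, h]
    have c1 : (1 - P) * A * (1 - P) = A - W₁ * D₁ * W₁ᵀ := by
      rw [Matrix.sub_mul, Matrix.one_mul, Matrix.mul_sub, Matrix.mul_one, Matrix.sub_mul,
        Matrix.mul_assoc P A P, e3, e1, e2]
      abel
    have c2 : W₁ * (D₁ - lk • 1) * W₁ᵀ = W₁ * D₁ * W₁ᵀ - lk • P := by
      rw [Matrix.mul_sub, Matrix.sub_mul, Matrix.mul_smul, Matrix.mul_one, Matrix.smul_mul, ← hP]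
    have key : A - lk • P
        = (1 - P) * A * (1 - P)
          + W₁ * Matrix.diagonal (fun i : Fin k => lam (Fin.castLE hkn i) - lk) * W₁ᵀ := by
      rw [hDk, c2, c1]
      abel
    have h1 : ((1 - P) * A * (1 - P)).PosSemidef := by
      have := hA.mul_mul_conjTranspose_same (1 - P)
      rwa [conjTranspose_eq_transpose_of_trivial, Matrix.transpose_sub, Matrix.transpose_one,
        hPT] at this
    have h2 : (W₁ * Matrix.diagonal (fun i : Fin k => lam (Fin.castLE hkn i) - lk)
        * W₁ᵀ).PosSemidef := by
      have hps : (Matrix.diagonal (fun i : Fin k => lam (Fin.castLE hkn i) - lk)).PosSemidef :=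
        posSemidef_diagonal_iff.mpr fun i =>
          sub_nonneg.mpr (hlam (Fin.mk_le_mk.mpr (by omega)))
      have := hps.mul_mul_conjTranspose_same W₁
      rwa [conjTranspose_eq_transpose_of_trivial] at this
    rw [key]
    exact h1.add h2
  -- coercivity of S
  have hcoerc : ∀ v : Fin k → ℝ, (lk * σ ^ 2) * (v ⬝ᵥ v) ≤ v ⬝ᵥ (S *ᵥ v) := by
    intro v
    have hPineq := psd_sub_smul_dot (X *ᵥ v) hPSD2
    have e1 : (X *ᵥ v) ⬝ᵥ ((W₁ * W₁ᵀ) *ᵥ (X *ᵥ v))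
        = ((W₁ᵀ * X) *ᵥ v) ⬝ᵥ ((W₁ᵀ * X) *ᵥ v) := by
      rw [← Matrix.mulVec_mulVec (X *ᵥ v) W₁ W₁ᵀ, dotProduct_comm, dot_mulVec_left,
        Matrix.mulVec_mulVec]
    have e2 : (X *ᵥ v) ⬝ᵥ (A *ᵥ (X *ᵥ v)) = v ⬝ᵥ (S *ᵥ v) := by
      rw [hSdef, ← Matrix.mulVec_mulVec v (Xᵀ * A) X, ← Matrix.mulVec_mulVec _ Xᵀ A,
        ← dot_mulVec_left X v _]
    have e3 : σ ^ 2 * (v ⬝ᵥ v) ≤ ((W₁ᵀ * X) *ᵥ v) ⬝ᵥ ((W₁ᵀ * X) *ᵥ v) := by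
      have h := sigmaMin_mul_norm_le (W₁ᵀ * X) ((WithLp.equiv 2 (Fin k → ℝ)).symm v)
      have h2 := pow_le_pow_left₀ (mul_nonneg hσ.le (norm_nonneg _)) h 2
      rw [norm_toEuclideanLin_sq] at h2
      simp only [Equiv.apply_symm_apply] at h2
      calc σ ^ 2 * (v ⬝ᵥ v)
          = (σ * ‖(WithLp.equiv 2 (Fin k → ℝ)).symm v‖) ^ 2 := by
            rw [mul_pow, norm_sq_eq_dot]
            simp only [Equiv.apply_symm_apply]
        _ ≤ _ := h2
    calc (lk * σ ^ 2) * (v ⬝ᵥ v) = lk * (σ ^ 2 * (v ⬝ᵥ v)) := by ring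
      _ ≤ lk * (((W₁ᵀ * X) *ᵥ v) ⬝ᵥ ((W₁ᵀ * X) *ᵥ v)) := mul_le_mul_of_nonneg_left e3 hlk.le
      _ = lk * ((X *ᵥ v) ⬝ᵥ ((W₁ * W₁ᵀ) *ᵥ (X *ᵥ v))) := by rw [e1]
      _ ≤ (X *ᵥ v) ⬝ᵥ (A *ᵥ (X *ᵥ v)) := hPineq
      _ = v ⬝ᵥ (S *ᵥ v) := e2
  -- S inverse facts
  have hdet : IsUnit S.det := (Matrix.isUnit_iff_isUnit_det S).mp hXAX
  have hSS : S * S⁻¹ = 1 := Matrix.mul_nonsing_inv S hdet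
  have hST : Sᵀ = S := by
    rw [hSdef, Matrix.transpose_mul, Matrix.transpose_mul, Matrix.transpose_transpose, hAT,
      ← Matrix.mul_assoc]
  have hSinvT : S⁻¹ᵀ = S⁻¹ := by rw [Matrix.transpose_nonsing_inv, hST]
  -- bound on the norm of S⁻¹
  have hSinvnorm : ‖S⁻¹‖ ≤ 1 / (lk * σ ^ 2) := by
    rw [Matrix.l2_opNorm_def]
    refine ContinuousLinearMap.opNorm_le_bound _ (by positivity) fun y => ?_
    show ‖toEuclideanLin S⁻¹ y‖ ≤ 1 / (lk * σ ^ 2) * ‖y‖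
    set x : EuclideanSpace ℝ (Fin k) := toEuclideanLin S⁻¹ y with hxdef
    have hxv : (WithLp.equiv 2 (Fin k → ℝ)) x
        = S⁻¹ *ᵥ (WithLp.equiv 2 (Fin k → ℝ)) y := rfl
    have key : (lk * σ ^ 2) * ‖x‖ ^ 2 ≤ ‖x‖ * ‖y‖ := by
      have h1 := hcoerc (S⁻¹ *ᵥ (WithLp.equiv 2 (Fin k → ℝ) y))
      have h2 : S *ᵥ (S⁻¹ *ᵥ (WithLp.equiv 2 (Fin k → ℝ) y))
          = WithLp.equiv 2 (Fin k → ℝ) y := by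
        rw [Matrix.mulVec_mulVec, hSS, Matrix.one_mulVec]
      rw [h2] at h1
      have h3 : (S⁻¹ *ᵥ (WithLp.equiv 2 (Fin k → ℝ) y)) ⬝ᵥ (WithLp.equiv 2 (Fin k → ℝ) y)
          ≤ ‖x‖ * ‖y‖ := by
        rw [← hxv, dot_eq_inner]
        exact real_inner_le_norm x y
      have h4 : ‖x‖ ^ 2 = (S⁻¹ *ᵥ (WithLp.equiv 2 (Fin k → ℝ) y))
          ⬝ᵥ (S⁻¹ *ᵥ (WithLp.equiv 2 (Fin k → ℝ) y)) := by
        rw [norm_sq_eq_dot, hxv]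
      calc (lk * σ ^ 2) * ‖x‖ ^ 2
          = (lk * σ ^ 2) * ((S⁻¹ *ᵥ (WithLp.equiv 2 (Fin k → ℝ) y))
            ⬝ᵥ (S⁻¹ *ᵥ (WithLp.equiv 2 (Fin k → ℝ) y))) := by rw [h4]
        _ ≤ _ := h1
        _ ≤ ‖x‖ * ‖y‖ := h3
    rcases eq_or_lt_of_le (norm_nonneg x) with h0 | h0
    · rw [← h0]
      positivity
    · rw [one_div, inv_mul_eq_div, le_div_iff₀ hσ2]
      nlinarith
  -- bound on the norm of B
  have hBnorm : ‖B‖ ≤ Real.sqrt l1 := by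
    apply l2_opNorm_le_of_dot _ (Real.sqrt_nonneg _)
    intro v
    rw [Real.sq_sqrt hl1.le]
    have e : (B *ᵥ v) ⬝ᵥ (B *ᵥ v) = v ⬝ᵥ (A *ᵥ v) := by
      rw [dot_mulVec_left, hBT, Matrix.mulVec_mulVec, hBB]
    rw [e]
    have := hPSD1.dotProduct_mulVec_nonneg v
    simp only [star_trivial, sub_mulVec, smul_mulVec, one_mulVec, dotProduct_sub,
      dotProduct_smul, smul_eq_mul] at this
    linarith
  -- bound on the norm of B X S⁻¹
  have hYnorm : ‖B * X * S⁻¹‖ ≤ Real.sqrt (1 / (lk * σ ^ 2)) := by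
    apply l2_opNorm_le_of_dot _ (Real.sqrt_nonneg _)
    intro v
    rw [Real.sq_sqrt (by positivity : (0:ℝ) ≤ 1 / (lk * σ ^ 2))]
    have hMTM : (B * X * S⁻¹)ᵀ * (B * X * S⁻¹) = S⁻¹ := by
      have hMT : (B * X * S⁻¹)ᵀ = S⁻¹ * (Xᵀ * B) := by
        rw [Matrix.transpose_mul, Matrix.transpose_mul, hSinvT, hBT]
      have h' : Xᵀ * (B * (B * (X * S⁻¹))) = S * S⁻¹ := by
        rw [← Matrix.mul_assoc B B, hBB, hSdef]
        simp only [Matrix.mul_assoc]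
      calc (B * X * S⁻¹)ᵀ * (B * X * S⁻¹)
          = S⁻¹ * (Xᵀ * (B * (B * (X * S⁻¹)))) := by
            rw [hMT]; simp only [Matrix.mul_assoc]
        _ = S⁻¹ * (S * S⁻¹) := by rw [h']
        _ = S⁻¹ := by rw [hSS, Matrix.mul_one]
    have e : ((B * X * S⁻¹) *ᵥ v) ⬝ᵥ ((B * X * S⁻¹) *ᵥ v) = v ⬝ᵥ (S⁻¹ *ᵥ v) := by
      rw [dot_mulVec_left, Matrix.mulVec_mulVec, hMTM]
    rw [e]
    set x := (WithLp.equiv 2 (Fin k → ℝ)).symm v with hx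
    have e2 : v ⬝ᵥ (S⁻¹ *ᵥ v) = ⟪x, toEuclideanLin S⁻¹ x⟫ := by
      rw [← dot_eq_inner]
      simp [hx]
    have e3 : ‖toEuclideanLin S⁻¹ x‖ ≤ ‖S⁻¹‖ * ‖x‖ := Matrix.l2_opNorm_mulVec S⁻¹ x
    calc v ⬝ᵥ (S⁻¹ *ᵥ v) = ⟪x, toEuclideanLin S⁻¹ x⟫ := e2
      _ ≤ ‖x‖ * ‖toEuclideanLin S⁻¹ x‖ := real_inner_le_norm _ _
      _ ≤ ‖x‖ * (‖S⁻¹‖ * ‖x‖) := mul_le_mul_of_nonneg_left e3 (norm_nonneg x)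
      _ ≤ ‖x‖ * ((1 / (lk * σ ^ 2)) * ‖x‖) :=
          mul_le_mul_of_nonneg_left
            (mul_le_mul_of_nonneg_right hSinvnorm (norm_nonneg x)) (norm_nonneg x)
      _ = (1 / (lk * σ ^ 2)) * ‖x‖ ^ 2 := by ring
      _ = 1 / (lk * σ ^ 2) * (v ⬝ᵥ v) := by
          rw [norm_sq_eq_dot]
          simp [hx]
  -- putting everything together
  have hfac : A * X * S⁻¹ = B * (B * X * S⁻¹) := by
    rw [← hBB]
    simp only [Matrix.mul_assoc]
  rw [hfac]
  calc ‖B * (B * X * S⁻¹)‖ ≤ ‖B‖ * ‖B * X * S⁻¹‖ := Matrix.l2_opNorm_mul B (B * X * S⁻¹)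
    _ ≤ Real.sqrt l1 * Real.sqrt (1 / (lk * σ ^ 2)) :=
        mul_le_mul hBnorm hYnorm (norm_nonneg _) (Real.sqrt_nonneg _)
    _ = Real.sqrt (l1 / lk) / σ := by
        rw [← Real.sqrt_mul hl1.le]
        have : l1 * (1 / (lk * σ ^ 2)) = (l1 / lk) / σ ^ 2 := by
          field_simp
        rw [this, Real.sqrt_div (by positivity : (0:ℝ) ≤ l1 / lk), Real.sqrt_sq hσ.le]

end Main
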